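/- Let N be a Nijenhuis operator on a compatible Hom-Lie algebra (g,[·,·]_1,[·,·]_2,α), and define ω_i(x,y) := [Nx,y]_i + [x,Ny]_i − N[x,y]_i for i = 1,2. Then for every scalar t, the quadruple (g, [·,·]_1 + tω_1, [·,·]_2 + tω_2, α) is a compatible Hom-Lie algebra, and id + tN is a morphism of compatible Hom-Lie algebras from (g, [·,·]_1 + tω_1, [·,·]_2 + tω_2, α) to (g, [·,·]_1, [·,·]_2, α) (so the linear deformation generated by (ω_1,ω_2) is trivial). -/
import Mathlib


/-- A bilinear map, as a predicate on plain two-argument functions. -/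
def IsBilin (K : Type*) {M N P : Type*} [Field K] [AddCommGroup M] [Module K M]
    [AddCommGroup N] [Module K N] [AddCommGroup P] [Module K P]
    (b : M → N → P) : Prop :=
  (∀ x, IsLinearMap K (b x)) ∧ (∀ y, IsLinearMap K fun x => b x y)

/-- A Hom-Lie algebra structure: bilinear skew-symmetric bracket `b` and a linear
twisting map `α` satisfying multiplicativity and the Hom-Jacobi identity. -/
def IsHomLie (K : Type*) {g : Type*} [Field K] [AddCommGroup g] [Module K g]
    (b : g → g → g) (α : g → g) : Prop :=
  IsBilin K b ∧ IsLinearMap K α ∧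
  (∀ x y, b x y = - b y x) ∧
  (∀ x y, α (b x y) = b (α x) (α y)) ∧
  (∀ x y z, b (b x y) (α z) + b (b y z) (α x) + b (b z x) (α y) = 0)

/-- A compatible Hom-Lie algebra: both brackets and every linear combination of
them are Hom-Lie brackets with the same twisting map `α`. -/
def IsCompatHomLie (K : Type*) {g : Type*} [Field K] [AddCommGroup g] [Module K g]
    (b₁ b₂ : g → g → g) (α : g → g) : Prop :=
  IsHomLie K b₁ α ∧ IsHomLie K b₂ α ∧
  ∀ l m : K, IsHomLie K (fun x y => l • b₁ x y + m • b₂ x y) α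

/-- Deforming a Hom-Lie bracket by a Nijenhuis operator yields a Hom-Lie bracket. -/
theorem homLie_deform {K g : Type*} [Field K] [AddCommGroup g] [Module K g]
    (b : g → g → g) (α N : g → g) (hb : IsHomLie K b α)
    (hN : IsLinearMap K N) (hcomm : ∀ x, α (N x) = N (α x))
    (hnij : ∀ x y, b (N x) (N y) = N (b (N x) y + b x (N y) - N (b x y))) (t : K) :
    IsHomLie K (fun x y => b x y + t • (b (N x) y + b x (N y) - N (b x y))) α := by
  obtain ⟨⟨hr, hl⟩, hα, hskew, hmul, hJ⟩ := hb
  have badd1 : ∀ u v w, b (u + v) w = b u w + b v w := fun u v w => (hl w).map_add u v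
  have bsub1 : ∀ u v w, b (u - v) w = b u w - b v w := fun u v w => (hl w).map_sub u v
  have bsmul1 : ∀ (c : K) u w, b (c • u) w = c • b u w := fun c u w => (hl w).map_smul c u
  have badd2 : ∀ u v w, b u (v + w) = b u v + b u w := fun u v w => (hr u).map_add v w
  have bsub2 : ∀ u v w, b u (v - w) = b u v - b u w := fun u v w => (hr u).map_sub v w
  have bsmul2 : ∀ (c : K) u w, b u (c • w) = c • b u w := fun c u w => (hr u).map_smul c w
  have nadd : ∀ u v, N (u + v) = N u + N v := hN.map_add
  have nsub : ∀ u v, N (u - v) = N u - N v := hN.map_sub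
  have nsmul : ∀ (c : K) u, N (c • u) = c • N u := hN.map_smul
  refine ⟨⟨fun x => ⟨?_, ?_⟩, fun y => ⟨?_, ?_⟩⟩, hα, ?_, ?_, ?_⟩
  · intro u v
    simp only [badd2, nadd]; module
  · intro c u
    simp only [bsmul2, nsmul]; module
  · intro u v
    simp only [badd1, nadd]; module
  · intro c u
    simp only [bsmul1, nsmul]; module
  · -- skew-symmetry
    intro x y
    have s4 : N (b x y) = - N (b y x) := by rw [hskew x y, hN.map_neg]
    linear_combination (norm := module) hskew x y + t • hskew (N x) y + t • hskew x (N y)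
      - t • s4
  · -- multiplicativity
    intro x y
    simp only [hα.map_add, hα.map_smul, hα.map_sub, hmul, hcomm]
  · -- Hom-Jacobi identity
    intro x y z
    have J0 := hJ x y z
    have Jx := hJ (N x) y z; have Jy := hJ x (N y) z; have Jz := hJ x y (N z)
    have Jxy := hJ (N x) (N y) z; have Jyz := hJ (N y) (N z) x; have Jzx := hJ (N z) (N x) y
    simp only [hcomm] at Jx Jy Jz Jxy Jyz Jzx
    have NJ0 := congrArg N J0
    have NJx := congrArg N Jx; have NJy := congrArg N Jy; have NJz := congrArg N Jz
    simp only [nadd, hN.map_zero] at NJ0 NJx NJy NJz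
    have NNJ0 := congrArg N NJ0
    simp only [nadd, hN.map_zero] at NNJ0
    have E1 : ∀ a c d, b (b (N a) (N c)) (α d)
        = b (N (b (N a) c)) (α d) + b (N (b a (N c))) (α d) - b (N (N (b a c))) (α d) := by
      intro a c d
      rw [hnij a c, nsub, nadd, bsub1, badd1]
    have E1a := E1 x y z; have E1b := E1 y z x; have E1c := E1 z x y
    have E2a := hnij (b x y) (α z); have E2b := hnij (b y z) (α x)
    have E2c := hnij (b z x) (α y)
    simp only [nadd, nsub] at E2a E2b E2c
    simp only [badd1, bsub1, bsmul1, badd2, bsub2, bsmul2, nadd, nsub, nsmul]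
    linear_combination (norm := module) J0 + t • (Jx + Jy + Jz) - t • NJ0
      + (t * t) • (Jxy + Jyz + Jzx - NJx - NJy - NJz + NNJ0 - E1a - E1b - E1c
        - E2a - E2b - E2c)

/-- A Nijenhuis operator `N` on a compatible Hom-Lie algebra generates a trivial
linear deformation: for each `t`, the deformed brackets `bᵢ + t ωᵢ` (with
`ωᵢ(x,y) = [Nx,y]ᵢ + [x,Ny]ᵢ − N[x,y]ᵢ`) form a compatible Hom-Lie algebra, and
`id + tN` is a morphism of compatible Hom-Lie algebras from the deformed
structure to the original one. -/
theorem stmt18 {K g : Type*} [Field K] [AddCommGroup g] [Module K g]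
    (b₁ b₂ : g → g → g) (α : g → g) (N : g → g)
    (h : IsCompatHomLie K b₁ b₂ α) (hN : IsLinearMap K N)
    (hcomm : ∀ x, α (N x) = N (α x))
    (hnij₁ : ∀ x y, b₁ (N x) (N y) = N (b₁ (N x) y + b₁ x (N y) - N (b₁ x y)))
    (hnij₂ : ∀ x y, b₂ (N x) (N y) = N (b₂ (N x) y + b₂ x (N y) - N (b₂ x y)))
    (t : K) :
    IsCompatHomLie K
      (fun x y => b₁ x y + t • (b₁ (N x) y + b₁ x (N y) - N (b₁ x y)))
      (fun x y => b₂ x y + t • (b₂ (N x) y + b₂ x (N y) - N (b₂ x y))) α ∧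
    (∀ x, α (x + t • N x) = α x + t • N (α x)) ∧
    (∀ x y,
      (b₁ x y + t • (b₁ (N x) y + b₁ x (N y) - N (b₁ x y)))
          + t • N (b₁ x y + t • (b₁ (N x) y + b₁ x (N y) - N (b₁ x y)))
        = b₁ (x + t • N x) (y + t • N y)) ∧
    (∀ x y,
      (b₂ x y + t • (b₂ (N x) y + b₂ x (N y) - N (b₂ x y)))
          + t • N (b₂ x y + t • (b₂ (N x) y + b₂ x (N y) - N (b₂ x y)))
        = b₂ (x + t • N x) (y + t • N y)) := by
  obtain ⟨h1, h2, h12⟩ := h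
  have morph : ∀ (b : g → g → g), IsHomLie K b α →
      (∀ x y, b (N x) (N y) = N (b (N x) y + b x (N y) - N (b x y))) →
      ∀ x y, (b x y + t • (b (N x) y + b x (N y) - N (b x y)))
          + t • N (b x y + t • (b (N x) y + b x (N y) - N (b x y)))
        = b (x + t • N x) (y + t • N y) := by
    intro b hb hnij x y
    obtain ⟨⟨hr, hl⟩, -, -, -, -⟩ := hb
    have e := hnij x y
    simp only [hN.map_add, hN.map_sub] at e
    simp only [(hl _).map_add, (hl _).map_smul, (hr _).map_add, (hr _).map_smul,
      hN.map_add, hN.map_sub, hN.map_smul]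
    linear_combination (norm := module) (-(t * t)) • e
  refine ⟨⟨homLie_deform b₁ α N h1 hN hcomm hnij₁ t,
    homLie_deform b₂ α N h2 hN hcomm hnij₂ t, ?_⟩, ?_, morph b₁ h1 hnij₁, morph b₂ h2 hnij₂⟩
  · intro l m
    have hnijc : ∀ x y, (l • b₁ (N x) (N y) + m • b₂ (N x) (N y))
        = N ((l • b₁ (N x) y + m • b₂ (N x) y) + (l • b₁ x (N y) + m • b₂ x (N y))
          - N (l • b₁ x y + m • b₂ x y)) := by
      intro x y
      rw [hnij₁, hnij₂]
      simp only [hN.map_add, hN.map_sub, hN.map_smul]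
      module
    have key := homLie_deform (fun x y => l • b₁ x y + m • b₂ x y) α N (h12 l m)
      hN hcomm hnijc t
    have heq : (fun x y => l • (b₁ x y + t • (b₁ (N x) y + b₁ x (N y) - N (b₁ x y)))
          + m • (b₂ x y + t • (b₂ (N x) y + b₂ x (N y) - N (b₂ x y))))
        = (fun x y => (l • b₁ x y + m • b₂ x y)
          + t • ((l • b₁ (N x) y + m • b₂ (N x) y) + (l • b₁ x (N y) + m • b₂ x (N y))
            - N (l • b₁ x y + m • b₂ x y))) := by
      funext x y
      simp only [hN.map_add, hN.map_smul]
      module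
    exact heq ▸ key
  · intro x
    rw [h1.2.1.map_add, h1.2.1.map_smul, hcomm]
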